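/- arXiv:1012.0659 — 5 statements merged into one kernel-verified Lean document; each statement's English description precedes it below -/
import Mathlib

section
/- Let A > 0 and let u : ℝ → ℝ be differentiable on the interval [-1, 1] and satisfy the Riccati equation u'(t) + u(t)^2 + K(t) = 0 on [-1, 1], where K : ℝ → ℝ satisfies K(t) ≥ -A^2 for all t ∈ [-1, 1]. Then |u(0)| ≤ A * cosh(A) / sinh(A). -/
open Real Set

lemma sinh_le_mul_cosh {y : ℝ} (hy : 0 ≤ y) : Real.sinh y ≤ y * Real.cosh y := by
  have h : ∀ x : ℝ, HasDerivAt (fun x => x * Real.cosh x - Real.sinh x) (x * Real.sinh x) x := by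
    intro x
    have h1 : HasDerivAt (fun x : ℝ => x * Real.cosh x) (1 * Real.cosh x + x * Real.sinh x) x :=
      (hasDerivAt_id x).mul (Real.hasDerivAt_cosh x)
    have h2 := Real.hasDerivAt_sinh x
    convert h1.sub h2 using 1
    all_goals try rfl
    ring
  have mono : MonotoneOn (fun x => x * Real.cosh x - Real.sinh x) (Ici 0) := by
    apply monotoneOn_of_deriv_nonneg (convex_Ici 0)
    · exact (Continuous.continuousOn (by continuity))
    · intro x hx
      exact (h x).differentiableAt.differentiableWithinAt
    · intro x hx
      rw [(h x).deriv]
      rw [interior_Ici] at hx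
      exact mul_nonneg (le_of_lt hx) (Real.sinh_nonneg_iff.2 (le_of_lt hx))
  have h0 := mono (self_mem_Ici) hy hy
  simp only [Real.cosh_zero, Real.sinh_zero, zero_mul, sub_zero] at h0
  linarith

lemma coth_anti {x y : ℝ} (hx : 0 < x) (hxy : x ≤ y) :
    Real.cosh y / Real.sinh y ≤ Real.cosh x / Real.sinh x := by
  have hsx : 0 < Real.sinh x := Real.sinh_pos_iff.2 hx
  have hsy : 0 < Real.sinh y := Real.sinh_pos_iff.2 (lt_of_lt_of_le hx hxy)
  rw [div_le_div_iff₀ hsy hsx]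
  have h := Real.sinh_nonneg_iff.2 (sub_nonneg.2 hxy)
  rw [Real.sinh_sub] at h
  nlinarith

lemma riccati_aux (A : ℝ) (hA : 0 < A) (u u' K : ℝ → ℝ)
    (hderiv : ∀ t ∈ Icc (-1 : ℝ) 1, HasDerivWithinAt u (u' t) (Icc (-1 : ℝ) 1) t)
    (hriccati : ∀ t ∈ Icc (-1 : ℝ) 1, u' t + (u t) ^ 2 + K t = 0)
    (hK : ∀ t ∈ Icc (-1 : ℝ) 1, -A ^ 2 ≤ K t) :
    u 0 ≤ A * Real.cosh A / Real.sinh A := by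
  have key : ∀ δ : ℝ, 0 < δ →
      u 0 ≤ (A + δ) * Real.cosh (A + δ) / Real.sinh (A + δ) := by
    intro δ hδ
    set c := A + δ with hc
    have hcpos : 0 < c := by positivity
    set M := max (u (-1)) 1 with hMdef
    have hM1 : (1:ℝ) ≤ M := le_max_right _ _
    have hMpos : 0 < M := lt_of_lt_of_le one_pos hM1
    set ε := 1 / M with hεdef
    have hε : 0 < ε := by positivity
    set s := 1 + ε with hsdef
    set B := fun t => c * Real.cosh (c * (t + s)) / Real.sinh (c * (t + s)) with hBdef
    have harg : ∀ t : ℝ, -1 ≤ t → 0 < c * (t + s) := by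
      intro t ht
      have : 0 < t + s := by simp only [hsdef]; linarith
      positivity
    have hsinh : ∀ t : ℝ, -1 ≤ t → 0 < Real.sinh (c * (t + s)) :=
      fun t ht => Real.sinh_pos_iff.2 (harg t ht)
    have hBD : ∀ x : ℝ, -1 ≤ x → HasDerivAt B (c ^ 2 - (B x) ^ 2) x := by
      intro x hx
      have hw : HasDerivAt (fun t : ℝ => c * (t + s)) c x := by
        simpa using ((hasDerivAt_id x).add_const s).const_mul c
      have hnum : HasDerivAt (fun t : ℝ => c * Real.cosh (c * (t + s)))
          (c * (Real.sinh (c * (x + s)) * c)) x :=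
        by simpa [Function.comp_def] using (((Real.hasDerivAt_cosh (c * (x + s))).comp x hw)).const_mul c
      have hden : HasDerivAt (fun t : ℝ => Real.sinh (c * (t + s)))
          (Real.cosh (c * (x + s)) * c) x :=
        by simpa [Function.comp_def] using (Real.hasDerivAt_sinh (c * (x + s))).comp x hw
      have hne : Real.sinh (c * (x + s)) ≠ 0 := ne_of_gt (hsinh x hx)
      have := hnum.div hden hne
      convert this using 1
      all_goals try rfl
      have hid : Real.cosh (c * (x + s)) ^ 2 - Real.sinh (c * (x + s)) ^ 2 = 1 :=
        Real.cosh_sq_sub_sinh_sq _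
      simp only [hBdef]
      field_simp [hBdef]
    have hf : ContinuousOn u (Icc (-1:ℝ) 0) := by
      intro t ht
      have ht' : t ∈ Icc (-1:ℝ) 1 := ⟨ht.1, by linarith [ht.2]⟩
      exact ((hderiv t ht').continuousWithinAt).mono (Icc_subset_Icc le_rfl (by norm_num))
    have hf' : ∀ x ∈ Ico (-1:ℝ) 0, HasDerivWithinAt u (u' x) (Ici x) x := by
      intro x hx
      have hx' : x ∈ Icc (-1:ℝ) 1 := ⟨hx.1, by linarith [hx.2]⟩
      exact (hderiv x hx').mono_of_mem_nhdsWithin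
        (Icc_mem_nhdsGE_of_mem ⟨hx.1, by linarith [hx.2]⟩)
    have ha : u (-1) ≤ B (-1) := by
      have hB1 : B (-1) = c * Real.cosh (c * ε) / Real.sinh (c * ε) := by
        have hse : -1 + s = ε := by rw [hsdef]; ring
        simp only [hBdef, hse]
      rw [hB1]
      have hcε : 0 < c * ε := by positivity
      have hs : 0 < Real.sinh (c * ε) := Real.sinh_pos_iff.2 hcε
      rw [le_div_iff₀ hs]
      have h1 : Real.sinh (c * ε) ≤ (c * ε) * Real.cosh (c * ε) :=
        sinh_le_mul_cosh (le_of_lt hcε)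
      have h2 : u (-1) ≤ M := le_max_left _ _
      have h3 : u (-1) * Real.sinh (c * ε) ≤ M * Real.sinh (c * ε) :=
        mul_le_mul_of_nonneg_right h2 (le_of_lt hs)
      have h4 : M * Real.sinh (c * ε) ≤ M * ((c * ε) * Real.cosh (c * ε)) :=
        mul_le_mul_of_nonneg_left h1 (le_of_lt hMpos)
      have hMε : M * ε = 1 := by
        rw [hεdef]
        field_simp
      calc u (-1) * Real.sinh (c * ε) ≤ M * ((c * ε) * Real.cosh (c * ε)) :=
            le_trans h3 h4
        _ = (M * ε) * (c * Real.cosh (c * ε)) := by ring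
        _ = c * Real.cosh (c * ε) := by rw [hMε]; ring
    have hB : ContinuousOn B (Icc (-1:ℝ) 0) := fun x hx =>
      (hBD x hx.1).continuousAt.continuousWithinAt
    have hB' : ∀ x ∈ Ico (-1:ℝ) 0, HasDerivWithinAt B (c ^ 2 - (B x) ^ 2) (Ici x) x :=
      fun x hx => (hBD x hx.1).hasDerivWithinAt
    have hbound : ∀ x ∈ Ico (-1:ℝ) 0, u x = B x → u' x < c ^ 2 - (B x) ^ 2 := by
      intro x hx heq
      have hx' : x ∈ Icc (-1:ℝ) 1 := ⟨hx.1, by linarith [hx.2]⟩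
      have h1 := hriccati x hx'
      have h2 := hK x hx'
      rw [← heq]
      nlinarith
    have hcomp : ∀ ⦃x⦄, x ∈ Icc (-1:ℝ) 0 → u x ≤ B x :=
      image_le_of_deriv_right_lt_deriv_boundary' hf hf' ha hB hB' hbound
    have h0 : u 0 ≤ B 0 := hcomp (by constructor <;> norm_num)
    have hB0 : B 0 = c * (Real.cosh (c * s) / Real.sinh (c * s)) := by
      simp only [hBdef]; ring_nf
    have hcs : c ≤ c * s := by
      nlinarith
    have := coth_anti hcpos hcs
    have hfin : B 0 ≤ c * (Real.cosh c / Real.sinh c) := by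
      rw [hB0]
      exact mul_le_mul_of_nonneg_left this (le_of_lt hcpos)
    calc u 0 ≤ B 0 := h0
      _ ≤ c * (Real.cosh c / Real.sinh c) := hfin
      _ = c * Real.cosh c / Real.sinh c := by ring
  have tend : Filter.Tendsto (fun δ : ℝ => (A + δ) * Real.cosh (A + δ) / Real.sinh (A + δ))
      (nhdsWithin 0 (Ioi 0)) (nhds (A * Real.cosh A / Real.sinh A)) := by
    have hcont : ContinuousAt (fun δ : ℝ => (A + δ) * Real.cosh (A + δ) / Real.sinh (A + δ)) 0 := by
      apply ContinuousAt.div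
      · fun_prop
      · fun_prop
      · simp only [add_zero]
        exact ne_of_gt (Real.sinh_pos_iff.2 hA)
    have h2 : Filter.Tendsto (fun δ : ℝ => (A + δ) * Real.cosh (A + δ) / Real.sinh (A + δ))
        (nhdsWithin 0 (Ioi 0)) (nhds ((A + 0) * Real.cosh (A + 0) / Real.sinh (A + 0))) :=
      hcont.tendsto.mono_left nhdsWithin_le_nhds
    simpa using h2
  exact ge_of_tendsto tend (eventually_mem_nhdsWithin.mono fun δ hδ => key δ hδ)

theorem riccati_midpoint_bound (A : ℝ) (hA : 0 < A) (u u' K : ℝ → ℝ)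
    (hderiv : ∀ t ∈ Icc (-1 : ℝ) 1, HasDerivWithinAt u (u' t) (Icc (-1 : ℝ) 1) t)
    (hriccati : ∀ t ∈ Icc (-1 : ℝ) 1, u' t + (u t) ^ 2 + K t = 0)
    (hK : ∀ t ∈ Icc (-1 : ℝ) 1, -A ^ 2 ≤ K t) :
    |u 0| ≤ A * Real.cosh A / Real.sinh A := by
  have hupper := riccati_aux A hA u u' K hderiv hriccati hK
  have hlower : -(A * Real.cosh A / Real.sinh A) ≤ u 0 := by
    have hmem : ∀ t : ℝ, t ∈ Icc (-1:ℝ) 1 → -t ∈ Icc (-1:ℝ) 1 := by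
      intro t ht
      exact ⟨by linarith [ht.2], by linarith [ht.1]⟩
    have h := riccati_aux A hA (fun t => -u (-t)) (fun t => u' (-t)) (fun t => K (-t))
      (by
        intro t ht
        have hneg : HasDerivWithinAt (fun s : ℝ => -s) (-1) (Icc (-1:ℝ) 1) t :=
          (hasDerivWithinAt_id t _).neg
        have hc := (hderiv (-t) (hmem t ht)).comp t hneg (fun s hs => hmem s hs)
        have := hc.neg
        convert this using 1
        all_goals try rfl
        ring)
      (by
        intro t ht
        have := hriccati (-t) (hmem t ht)
        ring_nf at this ⊢
        linarith)
      (by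
        intro t ht
        exact hK (-t) (hmem t ht))
    simp only [neg_zero] at h
    linarith
  exact abs_le.mpr ⟨hlower, hupper⟩
end

section
/- Let A > 0 and let u : ℝ → ℝ be differentiable on all of ℝ and satisfy u'(t) + u(t)^2 + K(t) = 0 for all t ∈ ℝ, where K(t) ≥ -A^2 for all t. Then |u(t)| ≤ A for all t ∈ ℝ. -/
/-- Helper: under the Riccati hypotheses, `u` is bounded below by `-A`. -/
lemma riccati_lower_bound (A : ℝ) (hA : 0 < A) (u u' K : ℝ → ℝ)
    (hderiv : ∀ t : ℝ, HasDerivAt u (u' t) t)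
    (hriccati : ∀ t : ℝ, u' t + (u t) ^ 2 + K t = 0)
    (hK : ∀ t : ℝ, -A ^ 2 ≤ K t) :
    ∀ t : ℝ, -A ≤ u t := by
  by_contra hcon
  push_neg at hcon
  obtain ⟨t₀, ht₀⟩ := hcon
  set y : ℝ → ℝ := fun t => -A - u t with hy_def
  have hy : ∀ t, HasDerivAt y (-(u' t)) t := fun t => (hderiv t).const_sub (-A)
  have key : ∀ t, (y t) ^ 2 + 2 * A * y t ≤ -(u' t) := by
    intro t
    have h1 := hriccati t
    have h2 := hK t
    simp only [hy_def]
    nlinarith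
  have hε : 0 < y t₀ := by simp only [hy_def]; linarith
  -- g = y * exp(-2At) is monotone
  set g : ℝ → ℝ := fun t => y t * Real.exp (-(2 * A) * t) with hg_def
  have hg : ∀ t, HasDerivAt g
      (-(u' t) * Real.exp (-(2 * A) * t) + y t * (Real.exp (-(2 * A) * t) * (-(2 * A) * 1))) t := by
    intro t
    exact (hy t).mul (((hasDerivAt_id t).const_mul (-(2 * A))).exp)
  have hgmono : Monotone g := by
    apply monotone_of_deriv_nonneg (fun t => (hg t).differentiableAt)
    intro t
    rw [(hg t).deriv]
    have hk := key t
    have he := Real.exp_pos (-(2 * A) * t)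
    nlinarith [sq_nonneg (y t), mul_nonneg (sq_nonneg (y t)) he.le]
  have hpos : ∀ t, t₀ ≤ t → y t₀ ≤ y t := by
    intro t ht
    have h1 : g t₀ ≤ g t := hgmono ht
    have h2 : Real.exp (-(2 * A) * t) ≤ Real.exp (-(2 * A) * t₀) := by
      apply Real.exp_le_exp.2
      nlinarith
    have he := Real.exp_pos (-(2 * A) * t)
    simp only [hg_def] at h1
    nlinarith [mul_nonneg hε.le (sub_nonneg.2 h2)]
  -- h = 1/y + t is antitone on [t₀, ∞)
  set h : ℝ → ℝ := fun t => (y t)⁻¹ + t with hh_def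
  have hht : ∀ t ∈ Set.Ici t₀, HasDerivAt h (-(-(u' t)) / (y t) ^ 2 + 1) t := by
    intro t ht
    have hyt : 0 < y t := lt_of_lt_of_le hε (hpos t ht)
    exact ((hy t).inv hyt.ne').add (hasDerivAt_id t)
  have hanti : AntitoneOn h (Set.Ici t₀) := by
    apply antitoneOn_of_deriv_nonpos (convex_Ici t₀)
    · exact fun t ht => (hht t ht).differentiableAt.continuousAt.continuousWithinAt
    · rw [interior_Ici]
      exact fun t ht => (hht t (Set.mem_Ici.2 (le_of_lt ht))).differentiableAt.differentiableWithinAt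
    · rw [interior_Ici]
      intro t ht
      rw [(hht t (Set.mem_Ici.2 (le_of_lt ht))).deriv]
      have hyt : 0 < y t := lt_of_lt_of_le hε (hpos t ht.le)
      have hk := key t
      have h2 : -(-(u' t)) / (y t) ^ 2 ≤ -1 := by
        rw [div_le_iff₀ (by positivity)]
        nlinarith
      linarith
  set T : ℝ := t₀ + (y t₀)⁻¹ + 1 with hT_def
  have hTge : t₀ ≤ T := by
    have h5 : 0 < (y t₀)⁻¹ := inv_pos.2 hε
    rw [hT_def]
    linarith
  have h3 : h T ≤ h t₀ := hanti (Set.self_mem_Ici) hTge hTge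
  have hyT : 0 < y T := lt_of_lt_of_le hε (hpos T hTge)
  have h4 : 0 < (y T)⁻¹ := inv_pos.2 hyT
  simp only [hh_def, hT_def] at h3
  linarith

theorem riccati_global_bound (A : ℝ) (hA : 0 < A) (u u' K : ℝ → ℝ)
    (hderiv : ∀ t : ℝ, HasDerivAt u (u' t) t)
    (hriccati : ∀ t : ℝ, u' t + (u t) ^ 2 + K t = 0)
    (hK : ∀ t : ℝ, -A ^ 2 ≤ K t) :
    ∀ t : ℝ, |u t| ≤ A := by
  have hlower := riccati_lower_bound A hA u u' K hderiv hriccati hK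
  -- time reversal: v t = -u (-t)
  have hupper : ∀ t : ℝ, u t ≤ A := by
    have hv : ∀ t : ℝ, HasDerivAt (fun s => -u (-s)) (u' (-t)) t := by
      intro t
      have h1 : HasDerivAt (fun s : ℝ => u (-s)) (u' (-t) * (-1)) t :=
        (hderiv (-t)).comp t (hasDerivAt_neg t)
      have h2 : HasDerivAt (fun s => -u (-s)) (-(u' (-t) * (-1))) t := h1.neg
      convert h2 using 1
      ring
    have := riccati_lower_bound A hA (fun s => -u (-s)) (fun s => u' (-s)) (fun s => K (-s))
      hv (fun t => by have := hriccati (-t); nlinarith)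
      (fun t => hK (-t))
    intro t
    have := this (-t)
    simp only [neg_neg] at this
    linarith
  intro t
  rw [abs_le]
  exact ⟨hlower t, hupper t⟩
end

section
/- Let F : [0, t] → ℝ be absolutely continuous, nondecreasing, with F(0) > 0, and let ω : [0, t] → ℝ be integrable. Define Ω(s) = ∫₀ˢ ω dℒ and suppose Ω(s) ≥ -M for all s ∈ [0, t], where M ≥ 0. Then ∫₀ᵗ ω(s)/F(s) ds ≥ -M / F(0). -/
open Set MeasureTheory intervalIntegral

lemma triangle_swap (τ : ℝ) (f g : ℝ → ℝ)
    (hf : IntegrableOn f (Ioc 0 τ)) (hg : IntegrableOn g (Ioc 0 τ)) :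
    ∫ x in Ioc (0:ℝ) τ, f x * ∫ s in Ioc (0:ℝ) x, g s
      = ∫ s in Ioc (0:ℝ) τ, g s * ∫ x in Ioc s τ, f x := by
  set μ := volume.restrict (Ioc (0:ℝ) τ) with hμ
  have hK : MeasurableSet {p : ℝ × ℝ | p.2 ≤ p.1} :=
    measurableSet_le measurable_snd measurable_fst
  set H : ℝ × ℝ → ℝ := ({p : ℝ × ℝ | p.2 ≤ p.1}).indicator (fun p => f p.1 * g p.2) with hH
  have hHint : Integrable H (μ.prod μ) := (hf.mul_prod hg).indicator hK
  have hswap := MeasureTheory.integral_integral_swap (f := fun x s => H (x, s)) hHint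
  have hL : ∀ x ∈ Ioc (0:ℝ) τ,
      (∫ s, H (x, s) ∂μ) = f x * ∫ s in Ioc (0:ℝ) x, g s := by
    intro x hx
    have h1 : (fun s => H (x, s)) = (Iic x).indicator (fun s => f x * g s) := by
      ext s
      simp only [hH, Set.indicator_apply, mem_setOf_eq, mem_Iic]
    rw [h1, hμ, MeasureTheory.setIntegral_indicator measurableSet_Iic,
      Set.Ioc_inter_Iic, min_eq_right hx.2, MeasureTheory.integral_const_mul]
  have hR : ∀ s ∈ Ioc (0:ℝ) τ,
      (∫ x, H (x, s) ∂μ) = g s * ∫ x in Ioc s τ, f x := by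
    intro s hs
    have h1 : (fun x => H (x, s)) = (Ici s).indicator (fun x => f x * g s) := by
      ext x
      simp only [hH, Set.indicator_apply, mem_setOf_eq, mem_Ici]
    have h2 : Ioc (0:ℝ) τ ∩ Ici s = Icc s τ := by
      ext x
      simp only [mem_inter_iff, mem_Ioc, mem_Ici, mem_Icc]
      constructor
      · rintro ⟨⟨_, h⟩, h'⟩; exact ⟨h', h⟩
      · rintro ⟨h', h⟩; exact ⟨⟨lt_of_lt_of_le hs.1 h', h⟩, h'⟩
    rw [h1, hμ, MeasureTheory.setIntegral_indicator measurableSet_Ici, h2,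
      MeasureTheory.integral_Icc_eq_integral_Ioc, MeasureTheory.integral_mul_const, mul_comm]
  calc ∫ x in Ioc (0:ℝ) τ, f x * ∫ s in Ioc (0:ℝ) x, g s
      = ∫ x, (∫ s, H (x, s) ∂μ) ∂μ :=
        (setIntegral_congr_fun measurableSet_Ioc (fun x hx => (hL x hx).symm))
    _ = ∫ s, (∫ x, H (x, s) ∂μ) ∂μ := hswap
    _ = ∫ s in Ioc (0:ℝ) τ, g s * ∫ x in Ioc s τ, f x :=
        setIntegral_congr_fun measurableSet_Ioc hR
theorem integral_omega_div_F_lower_bound (t M : ℝ) (ht : 0 ≤ t) (hM : 0 ≤ M)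
    (F F' ω : ℝ → ℝ)
    (hF0 : 0 < F 0)
    (hF'nonneg : ∀ x, 0 ≤ F' x)
    (hF'int : IntervalIntegrable F' MeasureTheory.volume 0 t)
    (hFac : ∀ s ∈ Icc (0 : ℝ) t, F s = F 0 + ∫ x in (0 : ℝ)..s, F' x)
    (hωint : IntervalIntegrable ω MeasureTheory.volume 0 t)
    (hΩ : ∀ s ∈ Icc (0 : ℝ) t, -M ≤ ∫ x in (0 : ℝ)..s, ω x) :
    -M / F 0 ≤ ∫ s in (0 : ℝ)..t, ω s / F s := by
  have huIcc : uIcc (0:ℝ) t = Icc 0 t := uIcc_of_le ht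
  have hFge : ∀ s ∈ Icc (0:ℝ) t, F 0 ≤ F s := by
    intro s hs
    rw [hFac s hs]
    have h0 : (0:ℝ) ≤ ∫ x in (0:ℝ)..s, F' x :=
      intervalIntegral.integral_nonneg hs.1 (fun x _ => hF'nonneg x)
    linarith
  have hFpos : ∀ s ∈ Icc (0:ℝ) t, 0 < F s := fun s hs => lt_of_lt_of_le hF0 (hFge s hs)
  have hFcont : ContinuousOn F (Icc 0 t) := by
    have h1 : ContinuousOn (fun s => F 0 + ∫ x in (0:ℝ)..s, F' x) (Icc 0 t) := by
      refine continuousOn_const.add ?_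
      have := intervalIntegral.continuousOn_primitive_interval' hF'int left_mem_uIcc
      rwa [huIcc] at this
    exact h1.congr hFac
  have hgint : IntervalIntegrable (fun s => ω s / F s) volume 0 t := by
    have hFinvcont : ContinuousOn (fun s => (F s)⁻¹) (Icc 0 t) :=
      ContinuousOn.inv₀ hFcont (fun s hs => ne_of_gt (hFpos s hs))
    have := hωint.mul_continuousOn (g := fun s => (F s)⁻¹) (by rwa [huIcc])
    simpa [div_eq_mul_inv] using this
  set I : ℝ → ℝ := fun x => ∫ s in (0:ℝ)..x, ω s / F s with hI
  have hIcont : ContinuousOn I (Icc 0 t) := by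
    have := intervalIntegral.continuousOn_primitive_interval' hgint left_mem_uIcc
    rwa [huIcc] at this
  obtain ⟨τ, hτ, hmin⟩ := isCompact_Icc.exists_isMinOn (Set.nonempty_Icc.2 ht) hIcont
  have hsub : uIcc (0:ℝ) τ ⊆ uIcc 0 t := by
    rw [huIcc, uIcc_of_le hτ.1]
    exact Icc_subset_Icc le_rfl hτ.2
  have hF'τ : IntervalIntegrable F' volume 0 τ := hF'int.mono_set hsub
  have hgτ : IntervalIntegrable (fun s => ω s / F s) volume 0 τ := hgint.mono_set hsub
  have key : ∫ x in (0:ℝ)..τ, F' x * I x = F τ * I τ - ∫ s in (0:ℝ)..τ, ω s := by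
    have hswap := triangle_swap τ F' (fun s => ω s / F s)
      (by rwa [intervalIntegrable_iff_integrableOn_Ioc_of_le hτ.1] at hF'τ)
      (by rwa [intervalIntegrable_iff_integrableOn_Ioc_of_le hτ.1] at hgτ)
    have hL : ∫ x in (0:ℝ)..τ, F' x * I x
        = ∫ x in Ioc (0:ℝ) τ, F' x * ∫ s in Ioc (0:ℝ) x, ω s / F s := by
      rw [intervalIntegral.integral_of_le hτ.1]
      refine setIntegral_congr_fun measurableSet_Ioc (fun x hx => ?_)
      simp only [hI]
      rw [intervalIntegral.integral_of_le hx.1.le]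
    have hR : ∫ s in Ioc (0:ℝ) τ, (ω s / F s) * ∫ x in Ioc s τ, F' x
        = F τ * I τ - ∫ s in (0:ℝ)..τ, ω s := by
      have hpt : ∀ s ∈ Ioc (0:ℝ) τ,
          (ω s / F s) * ∫ x in Ioc s τ, F' x = (ω s / F s) * F τ - ω s := by
        intro s hs
        have hsIcc : s ∈ Icc (0:ℝ) t := ⟨hs.1.le, hs.2.trans hτ.2⟩
        have hFs : F s ≠ 0 := ne_of_gt (hFpos s hsIcc)
        have hint1 : IntervalIntegrable F' volume 0 s := hF'int.mono_set
          (by rw [huIcc, uIcc_of_le hsIcc.1]; exact Icc_subset_Icc le_rfl hsIcc.2)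
        have hint2 : IntervalIntegrable F' volume s τ := hF'int.mono_set
          (by rw [huIcc, uIcc_of_le hs.2]; exact Icc_subset_Icc hs.1.le hτ.2)
        have hFd : ∫ x in Ioc s τ, F' x = F τ - F s := by
          rw [← intervalIntegral.integral_of_le hs.2]
          have hadd := intervalIntegral.integral_add_adjacent_intervals hint1 hint2
          rw [hFac τ hτ, hFac s hsIcc]
          linarith
        rw [hFd, mul_sub, div_mul_cancel₀ _ hFs]
      rw [setIntegral_congr_fun measurableSet_Ioc hpt]
      have hint1 : IntegrableOn (fun s => (ω s / F s) * F τ) (Ioc 0 τ) := by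
        have := hgτ.mul_const (F τ)
        rwa [intervalIntegrable_iff_integrableOn_Ioc_of_le hτ.1] at this
      have hint2 : IntegrableOn ω (Ioc 0 τ) := by
        have := hωint.mono_set hsub
        rwa [intervalIntegrable_iff_integrableOn_Ioc_of_le hτ.1] at this
      rw [integral_sub hint1 hint2]
      have e1 : ∫ s in Ioc (0:ℝ) τ, (ω s / F s) * F τ = F τ * I τ := by
        rw [← intervalIntegral.integral_of_le hτ.1, intervalIntegral.integral_mul_const]
        simp only [hI]
        ring
      have e2 : ∫ s in Ioc (0:ℝ) τ, ω s = ∫ s in (0:ℝ)..τ, ω s :=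
        (intervalIntegral.integral_of_le hτ.1).symm
      rw [e1, e2]
    exact hL.trans (hswap.trans hR)
  have hF'Iint : IntervalIntegrable (fun x => F' x * I x) volume 0 τ := by
    refine hF'τ.mul_continuousOn ?_
    exact hIcont.mono (by rw [uIcc_of_le hτ.1]; exact Icc_subset_Icc le_rfl hτ.2)
  have hmono : F τ * I τ - F 0 * I τ ≤ ∫ x in (0:ℝ)..τ, F' x * I x := by
    have h1 : ∫ x in (0:ℝ)..τ, F' x * I τ ≤ ∫ x in (0:ℝ)..τ, F' x * I x := by
      refine intervalIntegral.integral_mono_on hτ.1 (hF'τ.mul_const _) hF'Iint ?_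
      intro x hx
      exact mul_le_mul_of_nonneg_left (hmin ⟨hx.1, hx.2.trans hτ.2⟩) (hF'nonneg x)
    have h2 : ∫ x in (0:ℝ)..τ, F' x * I τ = F τ * I τ - F 0 * I τ := by
      rw [intervalIntegral.integral_mul_const, hFac τ hτ]
      ring
    linarith
  have hΩτ : -M ≤ ∫ x in (0:ℝ)..τ, ω x := hΩ τ hτ
  have hIτ : -M / F 0 ≤ I τ := by
    rw [div_le_iff₀ hF0]
    have hcomm : I τ * F 0 = F 0 * I τ := mul_comm _ _
    linarith [key, hmono, hΩτ]
  exact hIτ.trans (hmin (right_mem_Icc.2 ht))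
end

section
/- Let F : [0, ∞) → (0, ∞) be absolutely continuous and nondecreasing, let h : [0, ∞) → [0, ∞) be continuous, let ω : [0, ∞) → ℝ be locally integrable with ∫₀ˢ ω dℒ ≥ -h(s) for all s ≥ 0, let v(t) = v(0) + ∫₀ᵗ h dℒ with v(0) ≥ 0, and suppose that for almost every t ≥ 0: F(t) ≤ -2π ω(t) + 2 (2π F'(t) h(t))^{1/2}. Then for every t ≥ 0: (8π / F(0))^{1/2} · v(t)^{1/2} ≥ t - (2π / F(0)) · max_{s ∈ [0,t]} h(s). -/
open Set MeasureTheory Real Filter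


section aux
variable {F F' : ℝ → ℝ}

lemma fic_F'_subint (hF'int : ∀ t : ℝ, 0 ≤ t → IntervalIntegrable F' volume 0 t)
    {s u : ℝ} (hs : 0 ≤ s) (hsu : s ≤ u) : IntervalIntegrable F' volume s u := by
  apply (hF'int u (hs.trans hsu)).mono_set
  rw [uIcc_of_le hsu, uIcc_of_le (hs.trans hsu)]
  exact Icc_subset_Icc hs le_rfl

lemma fic_F_sub_eq (hF'int : ∀ t : ℝ, 0 ≤ t → IntervalIntegrable F' volume 0 t)
    (hFac : ∀ t : ℝ, 0 ≤ t → F t = F 0 + ∫ x in (0 : ℝ)..t, F' x)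
    {s u : ℝ} (hs : 0 ≤ s) (hsu : s ≤ u) : F u - F s = ∫ x in s..u, F' x := by
  rw [hFac u (hs.trans hsu), hFac s hs]
  rw [← intervalIntegral.integral_add_adjacent_intervals (hF'int s hs)
    (fic_F'_subint hF'int hs hsu)]
  ring

lemma fic_F_mono (hF'nonneg : ∀ x, 0 ≤ F' x)
    (hF'int : ∀ t : ℝ, 0 ≤ t → IntervalIntegrable F' volume 0 t)
    (hFac : ∀ t : ℝ, 0 ≤ t → F t = F 0 + ∫ x in (0 : ℝ)..t, F' x)
    {s u : ℝ} (hs : 0 ≤ s) (hsu : s ≤ u) : F s ≤ F u := by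
  have := fic_F_sub_eq hF'int hFac hs hsu
  have h2 : 0 ≤ ∫ x in s..u, F' x :=
    intervalIntegral.integral_nonneg hsu (fun x _ => hF'nonneg x)
  linarith

lemma fic_F_contOn (hF'int : ∀ t : ℝ, 0 ≤ t → IntervalIntegrable F' volume 0 t)
    (hFac : ∀ t : ℝ, 0 ≤ t → F t = F 0 + ∫ x in (0 : ℝ)..t, F' x)
    {T : ℝ} (hT : 0 ≤ T) : ContinuousOn F (Icc 0 T) := by
  have hInt : IntegrableOn F' (uIcc 0 T) volume := by
    rw [uIcc_of_le hT, integrableOn_Icc_iff_integrableOn_Ioc]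
    exact (intervalIntegrable_iff_integrableOn_Ioc_of_le hT).mp (hF'int T hT)
  have : ContinuousOn (fun s => F 0 + ∫ x in (0:ℝ)..s, F' x) (Icc 0 T) := by
    apply ContinuousOn.add continuousOn_const
    have := intervalIntegral.continuousOn_primitive_interval (a := (0:ℝ)) (b := T) hInt
    rwa [uIcc_of_le hT] at this
  exact this.congr (fun s hs => hFac s hs.1)

end aux

section aux2
variable {F F' : ℝ → ℝ}
  (hFpos : ∀ t : ℝ, 0 ≤ t → 0 < F t)
  (hF'nonneg : ∀ x, 0 ≤ F' x)
  (hF'int : ∀ t : ℝ, 0 ≤ t → IntervalIntegrable F' volume 0 t)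
  (hFac : ∀ t : ℝ, 0 ≤ t → F t = F 0 + ∫ x in (0 : ℝ)..t, F' x)

include hFpos hF'nonneg hF'int hFac

lemma fic_g_intOn {s u : ℝ} (hs : 0 ≤ s) (hsu : s ≤ u) :
    IntegrableOn (fun x => F' x / F x ^ 2) (Ioc s u) volume := by
  have hu : (0:ℝ) ≤ u := hs.trans hsu
  have hF'on : IntegrableOn F' (Ioc s u) volume :=
    (intervalIntegrable_iff_integrableOn_Ioc_of_le hsu).mp (fic_F'_subint hF'int hs hsu)
  have hFm : AEStronglyMeasurable F (volume.restrict (Ioc s u)) := by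
    apply ContinuousOn.aestronglyMeasurable _ measurableSet_Ioc
    exact (fic_F_contOn hF'int hFac hu).mono (fun x hx => ⟨hs.trans hx.1.le, hx.2⟩)
  have hgm : AEStronglyMeasurable (fun x => F' x / F x ^ 2)
      (volume.restrict (Ioc s u)) :=
    (hF'on.aestronglyMeasurable.aemeasurable.div
      (hFm.aemeasurable.pow_const 2)).aestronglyMeasurable
  apply Integrable.mono' (hF'on.div_const (F 0 ^ 2)) hgm
  rw [ae_restrict_iff' measurableSet_Ioc]
  filter_upwards with x hx
  have hx0 : (0:ℝ) ≤ x := hs.trans hx.1.le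
  have h1 : F 0 ≤ F x := fic_F_mono hF'nonneg hF'int hFac le_rfl hx0
  have h0 : 0 < F 0 := hFpos 0 le_rfl
  rw [Real.norm_eq_abs, abs_of_nonneg (div_nonneg (hF'nonneg x) (by positivity))]
  gcongr <;> first | exact hF'nonneg x | positivity | nlinarith

lemma fic_g_subint {s u : ℝ} (hs : 0 ≤ s) (hsu : s ≤ u) :
    IntervalIntegrable (fun x => F' x / F x ^ 2) volume s u :=
  (intervalIntegrable_iff_integrableOn_Ioc_of_le hsu).mpr
    (fic_g_intOn hFpos hF'nonneg hF'int hFac hs hsu)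

lemma fic_step_est {s u : ℝ} (hs : 0 ≤ s) (hsu : s ≤ u) :
    |(∫ x in s..u, F' x / F x ^ 2) - (1 / F s - 1 / F u)| ≤ (F u - F s) ^ 2 / F 0 ^ 3 := by
  have hu : (0:ℝ) ≤ u := hs.trans hsu
  have h0 : 0 < F 0 := hFpos 0 le_rfl
  have hFs : 0 < F s := hFpos s hs
  have hFu : 0 < F u := hFpos u hu
  have hF0s : F 0 ≤ F s := fic_F_mono hF'nonneg hF'int hFac le_rfl hs
  have hFsu : F s ≤ F u := fic_F_mono hF'nonneg hF'int hFac hs hsu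
  have hD : (∫ x in s..u, F' x) = F u - F s := (fic_F_sub_eq hF'int hFac hs hsu).symm
  have hgi := fic_g_subint hFpos hF'nonneg hF'int hFac hs hsu
  have hup : (∫ x in s..u, F' x / F x ^ 2) ≤ (F u - F s) / F s ^ 2 := by
    have : (∫ x in s..u, F' x / F x ^ 2) ≤ ∫ x in s..u, F' x / F s ^ 2 := by
      apply intervalIntegral.integral_mono_on hsu hgi
        ((fic_F'_subint hF'int hs hsu).div_const _)
      intro x hx
      have h2 : F s ≤ F x := fic_F_mono hF'nonneg hF'int hFac hs hx.1
      gcongr <;> first | exact hF'nonneg x | nlinarith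
    rwa [intervalIntegral.integral_div, hD] at this
  have hlo : (F u - F s) / F u ^ 2 ≤ ∫ x in s..u, F' x / F x ^ 2 := by
    have : (∫ x in s..u, F' x / F u ^ 2) ≤ ∫ x in s..u, F' x / F x ^ 2 := by
      apply intervalIntegral.integral_mono_on hsu
        ((fic_F'_subint hF'int hs hsu).div_const _) hgi
      intro x hx
      have h1 : F x ≤ F u := fic_F_mono hF'nonneg hF'int hFac (hs.trans hx.1) hx.2
      have h2 : F s ≤ F x := fic_F_mono hF'nonneg hF'int hFac hs hx.1
      gcongr <;> first | exact hF'nonneg x | nlinarith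
    rwa [intervalIntegral.integral_div, hD] at this
  have hF03s : F 0 ^ 3 ≤ F s ^ 2 * F u := by
    calc F 0 ^ 3 = F 0 ^ 2 * F 0 := by ring
    _ ≤ F s ^ 2 * F u :=
      mul_le_mul (pow_le_pow_left₀ h0.le hF0s 2) (hF0s.trans hFsu) h0.le (by positivity)
  have hF03u : F 0 ^ 3 ≤ F s * F u ^ 2 := by
    calc F 0 ^ 3 = F 0 ^ 2 * F 0 := by ring
    _ = F 0 * F 0 ^ 2 := by ring
    _ ≤ F s * F u ^ 2 :=
      mul_le_mul hF0s (pow_le_pow_left₀ h0.le (hF0s.trans hFsu) 2) (by positivity) hFs.le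
  rw [abs_sub_le_iff]
  constructor
  · have key : (F u - F s) / F s ^ 2 - (1 / F s - 1 / F u)
        = (F u - F s) ^ 2 / (F s ^ 2 * F u) := by
      field_simp
    have hle : (F u - F s) ^ 2 / (F s ^ 2 * F u) ≤ (F u - F s) ^ 2 / F 0 ^ 3 := by
      gcongr <;> positivity
    linarith
  · have key : (1 / F s - 1 / F u) - (F u - F s) / F u ^ 2
        = (F u - F s) ^ 2 / (F s * F u ^ 2) := by
      field_simp
    have hle : (F u - F s) ^ 2 / (F s * F u ^ 2) ≤ (F u - F s) ^ 2 / F 0 ^ 3 := by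
      gcongr <;> positivity
    linarith

include hFpos hF'nonneg hF'int hFac in
lemma fic_inv_F_identity {t : ℝ} (ht : 0 ≤ t) :
    ∫ x in (0:ℝ)..t, F' x / F x ^ 2 = 1 / F 0 - 1 / F t := by
  have FcontOn : ∀ {T : ℝ}, 0 ≤ T → ContinuousOn F (Icc 0 T) :=
    fun hT => fic_F_contOn hF'int hFac hT
  have Fmono : ∀ {s u : ℝ}, 0 ≤ s → s ≤ u → F s ≤ F u :=
    fun hs hsu => fic_F_mono hF'nonneg hF'int hFac hs hsu
  have gsubint : ∀ {s u : ℝ}, 0 ≤ s → s ≤ u →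
      IntervalIntegrable (fun x => F' x / F x ^ 2) volume s u :=
    fun hs hsu => fic_g_subint hFpos hF'nonneg hF'int hFac hs hsu
  have stepest : ∀ {s u : ℝ}, 0 ≤ s → s ≤ u →
      |(∫ x in s..u, F' x / F x ^ 2) - (1 / F s - 1 / F u)| ≤ (F u - F s) ^ 2 / F 0 ^ 3 :=
    fun hs hsu => fic_step_est hFpos hF'nonneg hF'int hFac hs hsu
  have h0 : 0 < F 0 := hFpos 0 le_rfl
  rcases eq_or_lt_of_le ht with rfl | htpos
  · simp
  have hF0t : F 0 ≤ F t := Fmono le_rfl ht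
  set I := ∫ x in (0:ℝ)..t, F' x / F x ^ 2 with hI
  have key : ∀ ε : ℝ, 0 < ε → |I - (1 / F 0 - 1 / F t)| ≤ ε := by
    intro ε hε
    have hA : 0 < F t - F 0 + 1 := by linarith
    set ε' : ℝ := ε * F 0 ^ 3 / (F t - F 0 + 1) with hε'def
    have hε'pos : 0 < ε' := by positivity
    have huc : UniformContinuousOn F (Icc 0 t) :=
      IsCompact.uniformContinuousOn_of_continuous isCompact_Icc (FcontOn ht)
    rw [Metric.uniformContinuousOn_iff] at huc
    obtain ⟨δ, hδpos, hδ⟩ := huc ε' hε'pos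
    obtain ⟨n, hn⟩ := exists_nat_gt (t / δ)
    have hnpos : 0 < (n : ℝ) := lt_of_le_of_lt (by positivity) hn
    have hn0 : (n : ℝ) ≠ 0 := hnpos.ne'
    set c : ℝ := t / n with hc
    have hcpos : 0 < c := by positivity
    have hcδ : c < δ := by
      rw [hc, div_lt_iff₀ hnpos]
      calc t = t / δ * δ := by field_simp
      _ < δ * n := by rw [mul_comm δ (n:ℝ)]; exact mul_lt_mul_of_pos_right hn hδpos
    set a : ℕ → ℝ := fun i => i * c with ha
    have ha0 : a 0 = 0 := by simp [ha]
    have han : a n = t := by simp only [ha, hc]; field_simp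
    have hamono : ∀ i : ℕ, a i ≤ a (i + 1) := by
      intro i
      have : (i : ℝ) ≤ (i : ℝ) + 1 := by linarith
      simp only [ha]
      push_cast
      nlinarith
    have hanonneg : ∀ i : ℕ, 0 ≤ a i := fun i => by positivity
    have hale : ∀ i : ℕ, i ≤ n → a i ≤ t := by
      intro i hi
      rw [← han]
      simp only [ha]
      have : (i : ℝ) ≤ (n : ℝ) := by exact_mod_cast hi
      nlinarith
    have hsum1 : ∑ i ∈ Finset.range n, ∫ x in a i..a (i+1), F' x / F x ^ 2
        = ∫ x in (a 0)..(a n), F' x / F x ^ 2 :=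
      intervalIntegral.sum_integral_adjacent_intervals
        (fun k _ => gsubint (hanonneg k) (hamono k))
    have hsum2 : ∑ i ∈ Finset.range n, (1 / F (a i) - 1 / F (a (i+1)))
        = 1 / F (a 0) - 1 / F (a n) := Finset.sum_range_sub' (fun i => 1 / F (a i)) n
    have hIR : I - (1 / F 0 - 1 / F t)
        = ∑ i ∈ Finset.range n, ((∫ x in a i..a (i+1), F' x / F x ^ 2)
            - (1 / F (a i) - 1 / F (a (i+1)))) := by
      rw [Finset.sum_sub_distrib, hsum1, hsum2, ha0, han]
    have hperi : ∀ i ∈ Finset.range n,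
        |(∫ x in a i..a (i+1), F' x / F x ^ 2) - (1 / F (a i) - 1 / F (a (i+1)))|
          ≤ ε' / F 0 ^ 3 * (F (a (i+1)) - F (a i)) := by
      intro i hi
      have hin : i + 1 ≤ n := Finset.mem_range.mp hi
      have hmem1 : a i ∈ Icc 0 t := ⟨hanonneg i, hale i (by omega)⟩
      have hmem2 : a (i+1) ∈ Icc 0 t := ⟨hanonneg (i+1), hale (i+1) hin⟩
      have hdist : dist (a (i+1)) (a i) < δ := by
        rw [Real.dist_eq]
        have : a (i+1) - a i = c := by simp only [ha]; push_cast; ring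
        rw [abs_of_nonneg (by linarith [hamono i])]
        rw [this]; exact hcδ
      have hΔnn : 0 ≤ F (a (i+1)) - F (a i) :=
        sub_nonneg.mpr (Fmono (hanonneg i) (hamono i))
      have hΔ : F (a (i+1)) - F (a i) < ε' := by
        have := hδ _ hmem2 _ hmem1 hdist
        rw [Real.dist_eq] at this
        calc F (a (i+1)) - F (a i) ≤ |F (a (i+1)) - F (a i)| := le_abs_self _
        _ < ε' := this
      calc |(∫ x in a i..a (i+1), F' x / F x ^ 2) - (1 / F (a i) - 1 / F (a (i+1)))|
          ≤ (F (a (i+1)) - F (a i)) ^ 2 / F 0 ^ 3 := stepest (hanonneg i) (hamono i)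
        _ ≤ ε' / F 0 ^ 3 * (F (a (i+1)) - F (a i)) := by
            rw [div_mul_eq_mul_div, sq]
            gcongr
    have habs : |I - (1 / F 0 - 1 / F t)| ≤ ε' / F 0 ^ 3 * (F t - F 0) := by
      rw [hIR]
      calc |∑ i ∈ Finset.range n, ((∫ x in a i..a (i+1), F' x / F x ^ 2)
            - (1 / F (a i) - 1 / F (a (i+1))))|
          ≤ ∑ i ∈ Finset.range n, |(∫ x in a i..a (i+1), F' x / F x ^ 2)
            - (1 / F (a i) - 1 / F (a (i+1)))| := Finset.abs_sum_le_sum_abs _ _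
        _ ≤ ∑ i ∈ Finset.range n, ε' / F 0 ^ 3 * (F (a (i+1)) - F (a i)) :=
            Finset.sum_le_sum hperi
        _ = ε' / F 0 ^ 3 * ∑ i ∈ Finset.range n, (F (a (i+1)) - F (a i)) := by
            rw [Finset.mul_sum]
        _ = ε' / F 0 ^ 3 * (F t - F 0) := by
            rw [Finset.sum_range_sub (fun i => F (a i)), ha0, han]
    refine habs.trans ?_
    have heq2 : ε' / F 0 ^ 3 * (F t - F 0) = ε * ((F t - F 0) / (F t - F 0 + 1)) := by
      rw [hε'def]; field_simp
    have hX1 : (F t - F 0) / (F t - F 0 + 1) ≤ 1 := by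
      rw [div_le_one hA]; linarith
    rw [heq2]
    calc ε * ((F t - F 0) / (F t - F 0 + 1)) ≤ ε * 1 := by gcongr
    _ = ε := mul_one ε
  have : |I - (1 / F 0 - 1 / F t)| ≤ 0 := by
    by_contra hcon
    push_neg at hcon
    have := key (|I - (1 / F 0 - 1 / F t)| / 2) (by linarith)
    linarith
  have := abs_nonneg (I - (1 / F 0 - 1 / F t))
  have heq : |I - (1 / F 0 - 1 / F t)| = 0 := le_antisymm ‹_› ‹_›
  rw [abs_eq_zero, sub_eq_zero] at heq
  exact heq

end aux2



lemma fic_cs_aux {a A B : ℝ} (hA : 0 ≤ A) (hB : 0 ≤ B)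
    (h : ∀ c : ℝ, 0 < c → a ≤ c * A / 2 + B / (2 * c)) :
    a ≤ Real.sqrt A * Real.sqrt B := by
  rcases eq_or_lt_of_le hA with rfl | hApos
  · -- A = 0
    have ha0 : a ≤ 0 := by
      by_contra hcon
      push_neg at hcon
      have hc : 0 < B / (2 * a) + 1 := by positivity
      have := h _ hc
      rw [mul_zero, zero_div, zero_add] at this
      have h2 : B / (2 * (B / (2 * a) + 1)) < a := by
        rw [div_lt_iff₀ (by positivity)]
        have e : a * (2 * (B / (2 * a) + 1)) = B + 2 * a := by field_simp
        linarith
      linarith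
    calc a ≤ 0 := ha0
    _ ≤ Real.sqrt 0 * Real.sqrt B := by positivity
  rcases eq_or_lt_of_le hB with rfl | hBpos
  · have ha0 : a ≤ 0 := by
      by_contra hcon
      push_neg at hcon
      have := h (a / A) (by positivity)
      rw [div_mul_eq_mul_div, mul_div_assoc, div_self hApos.ne', mul_one,
        zero_div, add_zero] at this
      linarith
    calc a ≤ 0 := ha0
    _ ≤ Real.sqrt A * Real.sqrt 0 := by positivity
  · set c := Real.sqrt B / Real.sqrt A with hc
    have hsA : 0 < Real.sqrt A := Real.sqrt_pos.mpr hApos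
    have hsB : 0 < Real.sqrt B := Real.sqrt_pos.mpr hBpos
    have hA2 : Real.sqrt A ^ 2 = A := Real.sq_sqrt hA
    have hB2 : Real.sqrt B ^ 2 = B := Real.sq_sqrt hB
    have hkey : c * A / 2 + B / (2 * c) = Real.sqrt A * Real.sqrt B := by
      rw [hc]
      field_simp
      nlinarith [hA2, hB2]
    have := h c (by positivity)
    linarith [hkey ▸ this]


set_option maxHeartbeats 2000000 in
theorem fundamental_inequality_consequence
    (F F' h ω v : ℝ → ℝ)
    (hFpos : ∀ t : ℝ, 0 ≤ t → 0 < F t)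
    (hF'nonneg : ∀ x, 0 ≤ F' x)
    (hF'int : ∀ t : ℝ, 0 ≤ t → IntervalIntegrable F' MeasureTheory.volume 0 t)
    (hFac : ∀ t : ℝ, 0 ≤ t → F t = F 0 + ∫ x in (0 : ℝ)..t, F' x)
    (hhcont : Continuous h) (hhnonneg : ∀ t : ℝ, 0 ≤ t → 0 ≤ h t)
    (hωint : ∀ t : ℝ, 0 ≤ t → IntervalIntegrable ω MeasureTheory.volume 0 t)
    (hωh : ∀ s : ℝ, 0 ≤ s → -h s ≤ ∫ x in (0 : ℝ)..s, ω x)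
    (hv0 : 0 ≤ v 0)
    (hv : ∀ t : ℝ, 0 ≤ t → v t = v 0 + ∫ x in (0 : ℝ)..t, h x)
    (hfund : ∀ᵐ t ∂(MeasureTheory.volume : Measure ℝ), 0 ≤ t →
      F t ≤ -2 * π * ω t + 2 * Real.sqrt (2 * π * F' t * h t)) :
    ∀ t : ℝ, 0 ≤ t →
      t - (2 * π / F 0) * sSup (h '' Icc (0 : ℝ) t) ≤
        Real.sqrt (8 * π / F 0) * Real.sqrt (v t) := by
  have F_mono : ∀ {s u : ℝ}, 0 ≤ s → s ≤ u → F s ≤ F u :=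
    fun hs hsu => fic_F_mono hF'nonneg hF'int hFac hs hsu
  have F_contOn : ∀ {T : ℝ}, 0 ≤ T → ContinuousOn F (Icc 0 T) :=
    fun hT => fic_F_contOn hF'int hFac hT
  have g_intOn : ∀ {s u : ℝ}, 0 ≤ s → s ≤ u →
      IntegrableOn (fun x => F' x / F x ^ 2) (Ioc s u) volume :=
    fun hs hsu => fic_g_intOn hFpos hF'nonneg hF'int hFac hs hsu
  have inv_F_identity : ∀ {t : ℝ}, 0 ≤ t →
      ∫ x in (0:ℝ)..t, F' x / F x ^ 2 = 1 / F 0 - 1 / F t :=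
    fun ht => fic_inv_F_identity hFpos hF'nonneg hF'int hFac ht
  have cs_aux : ∀ {a A B : ℝ}, 0 ≤ A → 0 ≤ B →
      (∀ c : ℝ, 0 < c → a ≤ c * A / 2 + B / (2 * c)) → a ≤ Real.sqrt A * Real.sqrt B :=
    fun hA hB hc => fic_cs_aux hA hB hc
  intro t ht
  set M := sSup (h '' Icc (0 : ℝ) t) with hM
  set g : ℝ → ℝ := fun x => F' x / F x ^ 2 with hg
  set Ω : ℝ → ℝ := fun u => ∫ x in (0:ℝ)..u, ω x with hΩ
  set ψ : ℝ → ℝ := fun x => Real.sqrt (2 * π * F' x * h x) / F x with hψ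
  have h0 : 0 < F 0 := hFpos 0 le_rfl
  have hFt : 0 < F t := hFpos t ht
  have hbdd : BddAbove (h '' Icc (0:ℝ) t) :=
    (isCompact_Icc.image_of_continuousOn hhcont.continuousOn).bddAbove
  have hMub : ∀ s ∈ Icc (0:ℝ) t, h s ≤ M := fun s hs => le_csSup hbdd ⟨s, hs, rfl⟩
  have hM0 : 0 ≤ M := (hhnonneg 0 le_rfl).trans (hMub 0 ⟨le_rfl, ht⟩)
  -- basic integrabilities on Ioc 0 t
  have hωon : IntegrableOn ω (Ioc 0 t) volume :=
    (intervalIntegrable_iff_integrableOn_Ioc_of_le ht).mp (hωint t ht)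
  have hgon : IntegrableOn g (Ioc 0 t) volume := g_intOn le_rfl ht
  have hhon : IntegrableOn h (Ioc 0 t) volume :=
    (hhcont.intervalIntegrable 0 t).def'.mono_set (by rw [uIoc_of_le ht])
  have hFboundlo : ∀ x ∈ Ioc (0:ℝ) t, F 0 ≤ F x := fun x hx => F_mono le_rfl hx.1.le
  have hFxpos : ∀ x ∈ Ioc (0:ℝ) t, 0 < F x := fun x hx => hFpos x hx.1.le
  have hFm : AEStronglyMeasurable F (volume.restrict (Ioc 0 t)) :=
    ContinuousOn.aestronglyMeasurable ((F_contOn ht).mono (fun x hx => ⟨hx.1.le, hx.2⟩))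
      measurableSet_Ioc
  have hF'on : IntegrableOn F' (Ioc 0 t) volume :=
    (intervalIntegrable_iff_integrableOn_Ioc_of_le ht).mp (hF'int t ht)
  have hωFon : IntegrableOn (fun x => ω x / F x) (Ioc 0 t) volume := by
    apply Integrable.mono' (hωon.norm.div_const (F 0))
      ((hωon.aestronglyMeasurable.aemeasurable.div hFm.aemeasurable).aestronglyMeasurable)
    rw [ae_restrict_iff' measurableSet_Ioc]
    filter_upwards with x hx
    simp only [Pi.div_apply, norm_div, Real.norm_eq_abs]
    rw [abs_of_pos (hFxpos x hx)]
    have h1 := hFboundlo x hx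
    have h2 := abs_nonneg (ω x)
    exact div_le_div_of_nonneg_left h2 h0 h1 |>.trans (le_of_eq rfl) |>.trans (le_refl _) |> id
  have hψm : AEStronglyMeasurable ψ (volume.restrict (Ioc 0 t)) := by
    apply AEMeasurable.aestronglyMeasurable
    apply AEMeasurable.div _ hFm.aemeasurable
    exact (Real.continuous_sqrt.measurable.comp_aemeasurable
      (((aemeasurable_const.mul hF'on.aestronglyMeasurable.aemeasurable).mul
        hhcont.measurable.aemeasurable)))
  have hψnonneg : ∀ x ∈ Ioc (0:ℝ) t, 0 ≤ ψ x := by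
    intro x hx
    exact div_nonneg (Real.sqrt_nonneg _) (hFxpos x hx).le
  have hψon : IntegrableOn ψ (Ioc 0 t) volume := by
    apply Integrable.mono' (((hF'on.const_mul (2*π)).add hhon).div_const (2 * F 0)) hψm
    rw [ae_restrict_iff' measurableSet_Ioc]
    filter_upwards with x hx
    have hFx := hFxpos x hx
    have hhx : 0 ≤ h x := hhnonneg x hx.1.le
    have hsq : Real.sqrt (2 * π * F' x * h x) ≤ (2 * π * F' x + h x) / 2 := by
      rw [show 2 * π * F' x * h x = (2 * π * F' x) * h x by ring,
        Real.sqrt_mul (mul_nonneg (by positivity) (hF'nonneg x))]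
      nlinarith [sq_nonneg (Real.sqrt (2 * π * F' x) - Real.sqrt (h x)),
        Real.sq_sqrt (mul_nonneg (by positivity : (0:ℝ) ≤ 2*π) (hF'nonneg x)), Real.sq_sqrt hhx,
        Real.sqrt_nonneg (2 * π * F' x), Real.sqrt_nonneg (h x)]
    rw [Real.norm_eq_abs, abs_of_nonneg (hψnonneg x hx)]
    have hnum : 0 ≤ 2 * π * F' x + h x := by
      have := hF'nonneg x
      nlinarith [pi_pos]
    show Real.sqrt (2 * π * F' x * h x) / F x ≤ (2 * π * F' x + h x) / (2 * F 0)
    rw [div_le_div_iff₀ hFx (by positivity)]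
    have h1 : Real.sqrt (2 * π * F' x * h x) * (2 * F 0)
        ≤ ((2 * π * F' x + h x) / 2) * (2 * F 0) :=
      mul_le_mul_of_nonneg_right hsq (by positivity)
    have h2 : ((2 * π * F' x + h x) / 2) * (2 * F 0)
        ≤ ((2 * π * F' x + h x) / 2) * (2 * F x) :=
      mul_le_mul_of_nonneg_left (by linarith [hFboundlo x hx])
        (div_nonneg hnum (by norm_num))
    have h3 : ((2 * π * F' x + h x) / 2) * (2 * F x) = (2 * π * F' x + h x) * F x := by
      ring
    linarith
  -- Step A: integrate the fundamental inequality
  have hfe : (fun x => (-2 * π * ω x + 2 * Real.sqrt (2 * π * F' x * h x)) / F x)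
      = fun x => (-2 * π) * (ω x / F x) + 2 * ψ x := by
    funext x
    simp only [hψ]
    ring
  have hRHSint : IntegrableOn
      (fun x => (-2 * π * ω x + 2 * Real.sqrt (2 * π * F' x * h x)) / F x)
      (Ioc 0 t) volume := by
    rw [hfe]
    exact (hωFon.const_mul _).add (hψon.const_mul 2)
  have hstepA : t ≤ ∫ x in Ioc (0:ℝ) t,
      (-2 * π * ω x + 2 * Real.sqrt (2 * π * F' x * h x)) / F x := by
    have hone : ∫ x in Ioc (0:ℝ) t, (1:ℝ) = t := by
      simp [Real.volume_Ioc, ENNReal.toReal_ofReal ht, ht]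
    nth_rewrite 1 [← hone]
    apply setIntegral_mono_ae_restrict ((integrableOn_const_iff).mpr (Or.inr (by
      rw [Real.volume_Ioc]; exact ENNReal.ofReal_lt_top))) hRHSint
    filter_upwards [ae_restrict_of_ae hfund, ae_restrict_mem measurableSet_Ioc]
      with x hx hxm
    have hFx := hFxpos x hxm
    rw [le_div_iff₀ hFx, one_mul]
    exact hx hxm.1.le
  -- Step B: split the integral
  have hsplit : ∫ x in Ioc (0:ℝ) t,
      (-2 * π * ω x + 2 * Real.sqrt (2 * π * F' x * h x)) / F x
      = (-2 * π) * (∫ x in Ioc (0:ℝ) t, ω x / F x) + 2 * ∫ x in Ioc (0:ℝ) t, ψ x := by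
    rw [hfe, integral_add (hωFon.const_mul _) (hψon.const_mul 2),
      integral_const_mul, integral_const_mul]
  -- interval integral identities
  have hgeval : ∀ s : ℝ, 0 ≤ s → s ≤ t → ∫ u in Ioc s t, g u = 1 / F s - 1 / F t := by
    intro s hs hst
    have hadj := intervalIntegral.integral_add_adjacent_intervals
      (a := (0:ℝ)) (b := s) (c := t)
      ((intervalIntegrable_iff_integrableOn_Ioc_of_le hs).mpr (g_intOn le_rfl hs))
      ((intervalIntegrable_iff_integrableOn_Ioc_of_le hst).mpr (g_intOn hs hst))
    rw [← intervalIntegral.integral_of_le hst]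
    have h1 := inv_F_identity hs
    have h2 := inv_F_identity ht
    simp only [hg] at hadj h1 h2 ⊢
    linarith
  have hveval : ∫ x in Ioc (0:ℝ) t, h x = v t - v 0 := by
    rw [← intervalIntegral.integral_of_le ht, hv t ht]
    ring
  have hvtnn : 0 ≤ v t := by
    rw [hv t ht]
    have : 0 ≤ ∫ x in (0:ℝ)..t, h x :=
      intervalIntegral.integral_nonneg ht (fun x hx => hhnonneg x hx.1)
    linarith
  have hgnonneg0 : ∀ u ∈ Ioc (0:ℝ) t, 0 ≤ g u := fun u hu =>
    div_nonneg (hF'nonneg u) (by positivity)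
  -- Step C : the lower bound on ∫ ω/F via Fubini
  have hC : -(M / F 0) ≤ ∫ x in Ioc (0:ℝ) t, ω x / F x := by
    set K : ℝ × ℝ → ℝ :=
      Set.indicator {q : ℝ × ℝ | q.1 ≤ q.2} (fun q => ω q.1 * g q.2) with hK
    set μ0 : Measure ℝ := volume.restrict (Ioc (0:ℝ) t) with hμ0
    have hΩlb : ∀ u ∈ Icc (0:ℝ) t, -M ≤ Ω u := by
      intro u hu
      calc -M ≤ -h u := neg_le_neg (hMub u hu)
      _ ≤ Ω u := hωh u hu.1
    have hbase : Integrable (fun p : ℝ × ℝ => ω p.1 * g p.2) (μ0.prod μ0) :=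
      hωon.mul_prod hgon
    have hsle : MeasurableSet {q : ℝ × ℝ | q.1 ≤ q.2} :=
      measurableSet_le measurable_fst measurable_snd
    have hKint : Integrable K (μ0.prod μ0) := by
      apply Integrable.mono' hbase.norm
        ((hωon.aestronglyMeasurable.comp_fst.mul hgon.aestronglyMeasurable.comp_snd).indicator hsle)
      filter_upwards with p
      exact norm_indicator_le_norm_self _ p
    have hswap : (∫ s, ∫ u, K (s, u) ∂μ0 ∂μ0) = ∫ u, ∫ s, K (s, u) ∂μ0 ∂μ0 :=
      integral_integral_swap (f := fun s u => K (s, u)) hKint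
    have hinner1 : ∀ s ∈ Ioc (0:ℝ) t,
        (∫ u, K (s, u) ∂μ0) = ω s * (1 / F s - 1 / F t) := by
      intro s hs
      have e1 : (fun u => K (s, u)) = Set.indicator (Ici s) (fun u => ω s * g u) := by
        funext u
        simp only [hK, Set.indicator_apply, mem_setOf_eq, mem_Ici]
      rw [e1, hμ0, integral_indicator measurableSet_Ici,
        Measure.restrict_restrict measurableSet_Ici]
      have e2 : Ici s ∩ Ioc (0:ℝ) t = Icc s t := by
        ext u'
        simp only [mem_inter_iff, mem_Ici, mem_Ioc, mem_Icc]
        constructor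
        · rintro ⟨h1, _, h3⟩; exact ⟨h1, h3⟩
        · rintro ⟨h1, h2⟩; exact ⟨h1, lt_of_lt_of_le hs.1 h1, h2⟩
      rw [e2, integral_Icc_eq_integral_Ioc, integral_const_mul, hgeval s hs.1.le hs.2]
    have hinner2 : ∀ u ∈ Ioc (0:ℝ) t,
        (∫ s, K (s, u) ∂μ0) = Ω u * g u := by
      intro u hu
      have e1 : (fun s => K (s, u)) = Set.indicator (Iic u) (fun s => ω s * g u) := by
        funext s'
        simp only [hK, Set.indicator_apply, mem_setOf_eq, mem_Iic]
      rw [e1, hμ0, integral_indicator measurableSet_Iic,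
        Measure.restrict_restrict measurableSet_Iic]
      have e2 : Iic u ∩ Ioc (0:ℝ) t = Ioc 0 u := by
        ext s'
        simp only [mem_inter_iff, mem_Iic, mem_Ioc]
        constructor
        · rintro ⟨h1, h2, _⟩; exact ⟨h2, h1⟩
        · rintro ⟨h1, h2⟩; exact ⟨h2, h1, h2.trans hu.2⟩
      rw [e2, integral_mul_const]
      congr 1
      simp only [hΩ]
      rw [intervalIntegral.integral_of_le hu.1.le]
    have hLcalc : (∫ s, ∫ u, K (s, u) ∂μ0 ∂μ0)
        = ∫ s in Ioc (0:ℝ) t, ω s * (1 / F s - 1 / F t) := by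
      rw [hμ0]
      exact setIntegral_congr_fun measurableSet_Ioc (fun s hs => hinner1 s hs)
    have hΩt : ∫ s in Ioc (0:ℝ) t, ω s = Ω t := by
      simp only [hΩ]
      rw [intervalIntegral.integral_of_le ht]
    have hLsplit : ∫ s in Ioc (0:ℝ) t, ω s * (1 / F s - 1 / F t)
        = (∫ s in Ioc (0:ℝ) t, ω s / F s) - (1 / F t) * Ω t := by
      have e3 : (fun s => ω s * (1 / F s - 1 / F t))
          = fun s => ω s / F s - (1 / F t) * ω s := by
        funext s'
        ring
      rw [e3, integral_sub hωFon (hωon.const_mul _), integral_const_mul, hΩt]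
    have hmarg : Integrable (fun u => Ω u * g u) μ0 := by
      apply (hKint.integral_prod_right).congr
      rw [hμ0]
      filter_upwards [ae_restrict_mem measurableSet_Ioc] with u hu
      exact hinner2 u hu
    have hRcalc : (∫ u, ∫ s, K (s, u) ∂μ0 ∂μ0) = ∫ u in Ioc (0:ℝ) t, Ω u * g u := by
      rw [hμ0]
      exact setIntegral_congr_fun measurableSet_Ioc (fun u hu => hinner2 u hu)
    have hRlb : -M * (1 / F 0 - 1 / F t) ≤ ∫ u in Ioc (0:ℝ) t, Ω u * g u := by
      have hmono : ∫ u in Ioc (0:ℝ) t, (-M) * g u ≤ ∫ u in Ioc (0:ℝ) t, Ω u * g u :=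
        setIntegral_mono_on (hgon.const_mul _) hmarg measurableSet_Ioc
          (fun u hu => mul_le_mul_of_nonneg_right (hΩlb u ⟨hu.1.le, hu.2⟩) (hgnonneg0 u hu))
      rwa [integral_const_mul, hgeval 0 le_rfl ht] at hmono
    have hΩtlb : -M ≤ Ω t := hΩlb t ⟨ht, le_rfl⟩
    have hcomb : (∫ s in Ioc (0:ℝ) t, ω s / F s) - (1 / F t) * Ω t
        ≥ -M * (1 / F 0 - 1 / F t) := by
      rw [← hLsplit, ← hLcalc, hswap, hRcalc]
      exact hRlb
    have hp : (1 / F t) * (-M) ≤ (1 / F t) * Ω t :=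
      mul_le_mul_of_nonneg_left hΩtlb (by positivity)
    have efin : -M * (1 / F 0 - 1 / F t) + 1 / F t * (-M) = -(M / F 0) := by ring
    linarith
  -- Step D : Cauchy-Schwarz bound
  have hD : (∫ x in Ioc (0:ℝ) t, ψ x) ≤ Real.sqrt (2 * π / F 0) * Real.sqrt (v t) := by
    apply cs_aux (by positivity) hvtnn
    intro c hc
    have hgnonneg : ∀ u ∈ Ioc (0:ℝ) t, 0 ≤ g u := by
      intro u hu
      exact div_nonneg (hF'nonneg u) (by positivity)
    have hpt : ∀ x ∈ Ioc (0:ℝ) t, ψ x ≤ (c * π) * g x + (1 / (2 * c)) * h x := by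
      intro x hx
      have hFx := hFxpos x hx
      have hhx : 0 ≤ h x := hhnonneg x hx.1.le
      have hgx := hgnonneg x hx
      have e1 : 2 * π * F' x * h x = ((2 * π * g x) * h x) * F x ^ 2 := by
        simp only [hg]
        field_simp
      have e2 : ψ x = Real.sqrt ((2 * π * g x) * h x) := by
        simp only [hψ]
        rw [e1, Real.sqrt_mul (mul_nonneg (mul_nonneg (by positivity) hgx) hhx),
          Real.sqrt_sq hFx.le, mul_div_assoc, div_self hFx.ne', mul_one]
      rw [e2]
      have amgm : Real.sqrt ((2 * π * g x) * h x)
          ≤ c * (2 * π * g x) / 2 + h x / (2 * c) := by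
        have hP : (0:ℝ) ≤ 2 * π * g x := mul_nonneg (by positivity) hgx
        have key2 : 2 * c * (Real.sqrt (2 * π * g x) * Real.sqrt (h x))
            ≤ c ^ 2 * (2 * π * g x) + h x := by
          nlinarith [sq_nonneg (c * Real.sqrt (2 * π * g x) - Real.sqrt (h x)),
            Real.sq_sqrt hP, Real.sq_sqrt hhx]
        rw [Real.sqrt_mul hP,
          show c * (2 * π * g x) / 2 + h x / (2 * c)
            = (c ^ 2 * (2 * π * g x) + h x) / (2 * c) by field_simp,
          le_div_iff₀ (by linarith : (0:ℝ) < 2 * c)]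
        nlinarith [key2]
      calc Real.sqrt ((2 * π * g x) * h x) ≤ c * (2 * π * g x) / 2 + h x / (2 * c) := amgm
      _ = (c * π) * g x + (1 / (2 * c)) * h x := by ring
    have hint : (∫ x in Ioc (0:ℝ) t, ψ x)
        ≤ ∫ x in Ioc (0:ℝ) t, ((c * π) * g x + (1 / (2 * c)) * h x) :=
      setIntegral_mono_on hψon ((hgon.const_mul _).add (hhon.const_mul _))
        measurableSet_Ioc hpt
    have hsplit2 : ∫ x in Ioc (0:ℝ) t, ((c * π) * g x + (1 / (2 * c)) * h x)
        = (c * π) * (∫ x in Ioc (0:ℝ) t, g x) + (1 / (2 * c)) * ∫ x in Ioc (0:ℝ) t, h x := by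
      rw [integral_add (hgon.const_mul _) (hhon.const_mul _),
        integral_const_mul, integral_const_mul]
    have hgval : ∫ x in Ioc (0:ℝ) t, g x = 1 / F 0 - 1 / F t := hgeval 0 le_rfl ht
    rw [hsplit2, hgval, hveval] at hint
    have p1 : (c * π) * (1 / F 0 - 1 / F t) ≤ (c * π) * (1 / F 0) :=
      mul_le_mul_of_nonneg_left (by simp only [sub_le_self_iff]; positivity)
        (by positivity)
    have p2 : (1 / (2 * c)) * (v t - v 0) ≤ (1 / (2 * c)) * v t :=
      mul_le_mul_of_nonneg_left (by linarith) (by positivity)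
    have e4 : (c * π) * (1 / F 0) = c * (2 * π / F 0) / 2 := by ring
    have e5 : (1 / (2 * c)) * v t = v t / (2 * c) := by ring
    linarith
  -- Step E : conclusion
  have h8 : Real.sqrt (8 * π / F 0) = 2 * Real.sqrt (2 * π / F 0) := by
    rw [show (8:ℝ) * π / F 0 = 2 ^ 2 * (2 * π / F 0) by ring,
      Real.sqrt_mul (by positivity), Real.sqrt_sq (by norm_num)]
  have hE : -2 * π * (∫ x in Ioc (0:ℝ) t, ω x / F x) ≤ 2 * π * (M / F 0) := by
    have := mul_le_mul_of_nonneg_left hC (show (0:ℝ) ≤ 2 * π by positivity)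
    nlinarith
  rw [h8]
  have e6 : (2 * π / F 0) * M = 2 * π * (M / F 0) := by ring
  rw [e6]
  nlinarith [hstepA, hsplit, hD, hE]
end

section
/- Let X be a metric space, f : X → ℝ a 1-Lipschitz function, S ⊆ X, and R > 0. Suppose that for every r in an interval (a, a + R) ⊆ ℝ the level set S ∩ f^{-1}({r}) contains at least two points. Then the 1-dimensional Hausdorff measure of S satisfies H¹(S) ≥ 2R. -/
open Set MeasureTheory Filter
open scoped ENNReal


theorem hausdorff_measure_ge_of_two_points_per_level
    {X : Type*} [MetricSpace X] [MeasurableSpace X] [BorelSpace X]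
    (f : X → ℝ) (hf : LipschitzWith 1 f) (S : Set X) (R a : ℝ) (hR : 0 < R)
    (htwo : ∀ r ∈ Set.Ioo a (a + R),
      ∃ x ∈ S ∩ f ⁻¹' {r}, ∃ y ∈ S ∩ f ⁻¹' {r}, x ≠ y) :
    ENNReal.ofReal (2 * R) ≤ μH[1] S := by
  by_contra hlt
  push_neg at hlt
  obtain ⟨c, hc1, hc2⟩ := exists_between hlt
  -- for each k, choose a cover of S with mesh ≤ (k+1)⁻¹ and total diameter sum < c
  have hcov : ∀ k : ℕ, ∃ t : ℕ → Set X, S ⊆ ⋃ n, t n ∧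
      (∀ n, EMetric.diam (t n) ≤ ((k : ℝ≥0∞) + 1)⁻¹) ∧
      ∑' n, EMetric.diam (t n) ≤ c := by
    intro k
    have hpos : (0 : ℝ≥0∞) < ((k : ℝ≥0∞) + 1)⁻¹ := by
      simp [ENNReal.inv_pos]
    have hI : (⨅ (t : ℕ → Set X) (_ : S ⊆ ⋃ n, t n)
        (_ : ∀ n, EMetric.diam (t n) ≤ ((k : ℝ≥0∞) + 1)⁻¹),
        ∑' n, ⨆ _ : (t n).Nonempty, EMetric.diam (t n) ^ (1 : ℝ)) < c := by
      refine lt_of_le_of_lt ?_ hc1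
      rw [MeasureTheory.Measure.hausdorffMeasure_apply]
      exact le_iSup₂ (f := fun (r : ℝ≥0∞) (_ : 0 < r) =>
        ⨅ (t : ℕ → Set X) (_ : S ⊆ ⋃ n, t n) (_ : ∀ n, EMetric.diam (t n) ≤ r),
        ∑' n, ⨆ _ : (t n).Nonempty, EMetric.diam (t n) ^ (1 : ℝ)) _ hpos
    simp only [iInf_lt_iff] at hI
    obtain ⟨t, h1, h2, h3⟩ := hI
    refine ⟨t, h1, h2, le_trans ?_ h3.le⟩
    refine ENNReal.tsum_le_tsum fun n => ?_
    rcases (t n).eq_empty_or_nonempty with he | hne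
    · simp [he]; exact EMetric.diam_empty
    · rw [iSup_pos hne, ENNReal.rpow_one]
  choose t hcov hmesh hsum using hcov
  -- the measurable hulls of the images of the cover pieces
  set J : ℕ → ℕ → Set ℝ := fun k n => toMeasurable volume (f '' t k n) with hJ
  have hJmeas : ∀ k n, MeasurableSet (J k n) := fun k n => measurableSet_toMeasurable _ _
  have hJvol : ∀ k n, volume (J k n) ≤ EMetric.diam (t k n) := by
    intro k n
    calc volume (J k n) = volume (f '' t k n) := measure_toMeasurable _
      _ ≤ EMetric.diam (f '' t k n) := Real.volume_le_diam _
      _ ≤ 1 * EMetric.diam (t k n) := hf.ediam_image_le _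
      _ = EMetric.diam (t k n) := one_mul _
  set g : ℕ → ℝ → ℝ≥0∞ := fun k r => ∑' n, (J k n).indicator 1 r with hg
  have hgmeas : ∀ k, Measurable (g k) := fun k =>
    Measurable.ennreal_tsum fun n => measurable_const.indicator (hJmeas k n)
  have hgint : ∀ k, ∫⁻ r, g k r ≤ c := by
    intro k
    rw [hg]
    simp only
    refine le_trans (le_of_eq (lintegral_tsum (f := fun n => (J k n).indicator 1)
      fun n => (measurable_const.indicator (hJmeas k n)).aemeasurable)) ?_
    calc ∑' n, ∫⁻ r, (J k n).indicator 1 r = ∑' n, volume (J k n) := by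
          exact tsum_congr fun n => lintegral_indicator_one (hJmeas k n)
      _ ≤ ∑' n, EMetric.diam (t k n) := ENNReal.tsum_le_tsum fun n => hJvol k n
      _ ≤ c := hsum k
  -- pointwise lower bound for liminf on the interval
  have hpt : ∀ r ∈ Set.Ioo a (a + R), (2 : ℝ≥0∞) ≤ atTop.liminf fun k => g k r := by
    intro r hr
    obtain ⟨x, ⟨hxS, hxf⟩, y, ⟨hyS, hyf⟩, hxy⟩ := htwo r hr
    have hd : (0 : ℝ≥0∞) < edist x y := edist_pos.mpr hxy
    obtain ⟨N, hN⟩ := ENNReal.exists_inv_nat_lt hd.ne'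
    refine Filter.le_liminf_of_le (by isBoundedDefault) ?_
    rw [eventually_atTop]
    refine ⟨N, fun k hk => ?_⟩
    obtain ⟨m, hm⟩ := mem_iUnion.mp (hcov k hxS)
    obtain ⟨n, hn⟩ := mem_iUnion.mp (hcov k hyS)
    have hmesh' : ((k : ℝ≥0∞) + 1)⁻¹ < edist x y := by
      refine lt_of_le_of_lt ?_ hN
      refine ENNReal.inv_le_inv.mpr ?_
      exact le_trans (Nat.cast_le.mpr hk) (le_add_of_nonneg_right zero_le_one)
    have hmn : m ≠ n := by
      rintro rfl
      exact absurd (EMetric.edist_le_diam_of_mem hm hn) (not_le.mpr ((hmesh k m).trans_lt hmesh'))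
    have hxm : r ∈ J k m := subset_toMeasurable _ _ ⟨x, hm, hxf⟩
    have hyn : r ∈ J k n := subset_toMeasurable _ _ ⟨y, hn, hyf⟩
    have : (J k m).indicator 1 r + (J k n).indicator 1 r ≤ g k r := by
      have := Summable.sum_le_tsum (f := fun n => (J k n).indicator (1 : ℝ → ℝ≥0∞) r) {m, n}
        (fun _ _ => zero_le) ENNReal.summable
      rwa [Finset.sum_pair hmn] at this
    refine le_trans ?_ this
    rw [Set.indicator_of_mem hxm, Set.indicator_of_mem hyn]
    norm_num
  -- put everything together
  have key : ENNReal.ofReal (2 * R) ≤ c := by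
    calc ENNReal.ofReal (2 * R)
        = ∫⁻ _ in Set.Ioo a (a + R), (2 : ℝ≥0∞) := by
          rw [MeasureTheory.setLIntegral_const, Real.volume_Ioo]
          rw [show a + R - a = R by ring, ENNReal.ofReal_mul (by norm_num)]
          norm_num
      _ ≤ ∫⁻ r in Set.Ioo a (a + R), atTop.liminf fun k => g k r :=
          setLIntegral_mono (Measurable.liminf hgmeas) hpt
      _ ≤ ∫⁻ r, atTop.liminf fun k => g k r := setLIntegral_le_lintegral _ _
      _ ≤ atTop.liminf fun k => ∫⁻ r, g k r := lintegral_liminf_le hgmeas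
      _ ≤ atTop.liminf fun _ => c := liminf_le_liminf (Eventually.of_forall hgint)
      _ = c := liminf_const c
  exact absurd (key.trans_lt hc2) (lt_irrefl _)
end
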